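/- Let G be a finite non-abelian group. Then T(G) is disconnected strongly regular if and only if the centralizer of every non-central element of G is abelian and there exists an integer r ≥ 3 with [C_G(x) : Z(G)] = r for all non-central x ∈ G. -/

import Mathlib

/-- The commuting graph of a group `G` on a subset `X`. -/
def commGraph (G : Type*) [Group G] (X : Set G) : SimpleGraph X where
  Adj x y := x ≠ y ∧ (x : G) * y = (y : G) * x
  symm := ⟨fun x y ⟨h1, h2⟩ => ⟨h1.symm, h2.symm⟩⟩
  loopless := ⟨fun x ⟨h, _⟩ => h rfl⟩

/-- `T` is a transversal of the center of `G`: each coset of `Z(G)` contains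
exactly one element of `T`. -/
def IsCenterTransversal (G : Type*) [Group G] (T : Set G) : Prop :=
  ∀ g : G, ∃! t, t ∈ T ∧ g⁻¹ * t ∈ Subgroup.center G

/-- The graph `T(G)`: the commuting graph of `G` on `T \ Z(G)`. -/
def TGraph (G : Type*) [Group G] (T : Set G) :
    SimpleGraph ↥(T \ (Subgroup.center G : Set G)) :=
  commGraph G (T \ (Subgroup.center G : Set G))

/-- Strongly regular graph with parameters `(v, k, l, m)` (with `0 < k < v - 1`). -/
def IsSRG {V : Type*} (G : SimpleGraph V) (v k l m : ℕ) : Prop :=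
  Nat.card V = v ∧ 0 < k ∧ k + 1 < v ∧
    (∀ x, (G.neighborSet x).ncard = k) ∧
    (∀ x y, G.Adj x y → (G.neighborSet x ∩ G.neighborSet y).ncard = l) ∧
    (∀ x y, x ≠ y → ¬ G.Adj x y → (G.neighborSet x ∩ G.neighborSet y).ncard = m)

/-- The disjoint union of `m` copies of the complete graph `K_n`. -/
def mKn (m n : ℕ) : SimpleGraph (Fin m × Fin n) where
  Adj x y := x ≠ y ∧ x.1 = y.1
  symm := ⟨fun x y ⟨h1, h2⟩ => ⟨h1.symm, h2.symm⟩⟩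
  loopless := ⟨fun x ⟨h, _⟩ => h rfl⟩

open scoped commutatorElement

theorem commutator_mem_commutatorSubgroup {G : Type*} [Group G] (x y : G) :
    ⁅x, y⁆ ∈ commutator G := by
  rw [commutator_def]
  exact Subgroup.commutator_mem_commutator (Subgroup.mem_top x) (Subgroup.mem_top y)

/-- Isoclinism of groups. -/
def Isoclinic (G H : Type*) [Group G] [Group H] : Prop :=
  ∃ (φ : G ⧸ Subgroup.center G ≃* H ⧸ Subgroup.center H)
    (ψ : commutator G ≃* commutator H),
    ∀ (x y : G) (x' y' : H),
      φ (QuotientGroup.mk x) = QuotientGroup.mk x' →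
      φ (QuotientGroup.mk y) = QuotientGroup.mk y' →
      (ψ ⟨⁅x, y⁆, commutator_mem_commutatorSubgroup x y⟩ : H) = ⁅x', y'⁆

/-- An extraspecial `p`-group: `G' = Z(G) = Φ(G)` and `|Z(G)| = p`. -/
def IsExtraspecial (p : ℕ) (G : Type*) [Group G] : Prop :=
  IsPGroup p G ∧ commutator G = Subgroup.center G ∧
    frattini G = Subgroup.center G ∧ Nat.card (Subgroup.center G) = p

open Pointwise Subgroup

section Helpers


section Helpers

variable {G : Type*} [Group G] {T : Set G} (hT : IsCenterTransversal G T)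

noncomputable def ctRep (g : G) : G := (hT g).choose

lemma ctRep_mem (g : G) : ctRep hT g ∈ T := (hT g).choose_spec.1.1

lemma ctRep_spec (g : G) : g⁻¹ * ctRep hT g ∈ center G := (hT g).choose_spec.1.2

lemma ctRep_unique {g t : G} (ht : t ∈ T) (h : g⁻¹ * t ∈ center G) :
    t = ctRep hT g := (hT g).choose_spec.2 t ⟨ht, h⟩

lemma ctRep_eq_self {t : G} (ht : t ∈ T) : ctRep hT t = t :=
  (ctRep_unique hT ht (by simp [one_mem])).symm

/-- commuting with a central twist -/
lemma mul_center_comm {z : G} (hz : z ∈ center G) (a c : G) :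
    (a * z) * c = c * (a * z) ↔ a * c = c * a := by
  have h := Subgroup.mem_center_iff.mp hz
  rw [show (a * z) * c = (a * c) * z by rw [mul_assoc, ← h c, ← mul_assoc],
    show c * (a * z) = (c * a) * z from (mul_assoc c a z).symm]
  exact mul_left_inj z

lemma ctRep_decomp (g : G) : ctRep hT g = g * (g⁻¹ * ctRep hT g) := by group

lemma ctRep_commute (g c : G) :
    ctRep hT g * c = c * ctRep hT g ↔ g * c = c * g := by
  conv_lhs => rw [ctRep_decomp hT g]
  exact mul_center_comm (ctRep_spec hT g) g c

lemma ctRep_mem_center_iff (g : G) : ctRep hT g ∈ center G ↔ g ∈ center G := by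
  constructor <;> intro h
  · rw [Subgroup.mem_center_iff]
    intro c
    exact ((ctRep_commute hT g c).mp ((Subgroup.mem_center_iff.mp h c).symm)).symm
  · rw [Subgroup.mem_center_iff]
    intro c
    exact ((ctRep_commute hT g c).mpr ((Subgroup.mem_center_iff.mp h c).symm)).symm

lemma ctRep_eq_iff (a x : G) : ctRep hT a = ctRep hT x ↔ a⁻¹ * x ∈ center G := by
  constructor
  · intro h
    have h1 := ctRep_spec hT a
    have h2 := ctRep_spec hT x
    rw [h] at h1
    have : a⁻¹ * x = (a⁻¹ * ctRep hT x) * (x⁻¹ * ctRep hT x)⁻¹ := by group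
    rw [this]
    exact mul_mem h1 (inv_mem h2)
  · intro h
    have : a⁻¹ * ctRep hT x ∈ center G := by
      have : a⁻¹ * ctRep hT x = (a⁻¹ * x) * (x⁻¹ * ctRep hT x) := by group
      rw [this]
      exact mul_mem h (ctRep_spec hT x)
    exact ((ctRep_unique hT (ctRep_mem hT x) this)).symm

lemma ctRep_centralizer (g : G) :
    centralizer {ctRep hT g} = centralizer ({g} : Set G) := by
  ext c
  rw [mem_centralizer_singleton_iff, mem_centralizer_singleton_iff]
  constructor <;> intro h
  · exact ((ctRep_commute hT g c).mp h.symm).symm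
  · exact ((ctRep_commute hT g c).mpr h.symm).symm

include hT in
/-- The key counting: `T ∩ C_G(x)` has exactly `[C_G(x) : Z(G)]` elements. -/
lemma ctRep_card (x : G) :
    Nat.card ↥(T ∩ (centralizer {x} : Set G)) =
      (center G).relIndex (centralizer {x}) := by
  set C := centralizer ({x} : Set G) with hC
  have key : Function.Bijective
      (fun t : ↥(T ∩ (C : Set G)) =>
        (QuotientGroup.mk ⟨(t : G), t.2.2⟩ : ↥C ⧸ (center G).subgroupOf C)) := by
    constructor
    · rintro ⟨t1, ht1⟩ ⟨t2, ht2⟩ h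
      have h' := (QuotientGroup.eq).mp h
      rw [mem_subgroupOf] at h'
      simp only [Subtype.mk.injEq]
      have : t2 = ctRep hT t1 := ctRep_unique hT ht2.1 h'
      rw [this, ctRep_eq_self hT ht1.1]
    · intro q
      induction q using QuotientGroup.induction_on with
      | H c =>
        refine ⟨⟨ctRep hT (c : G), ctRep_mem hT _, ?_⟩, ?_⟩
        · rw [ctRep_decomp hT (c : G)]
          exact mul_mem c.2 (center_le_centralizer {x} (ctRep_spec hT _))
        · apply (QuotientGroup.eq).mpr
          rw [mem_subgroupOf]
          show (ctRep hT (c : G))⁻¹ * (c : G) ∈ center G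
          have h := inv_mem (ctRep_spec hT (c : G))
          simpa [mul_inv_rev] using h
  calc Nat.card ↥(T ∩ (C : Set G)) = Nat.card (↥C ⧸ (center G).subgroupOf C) :=
        Nat.card_eq_of_bijective _ key
    _ = (center G).relIndex C := rfl

end Helpers

section GraphHelpers

variable {G : Type*} [Group G] [Finite G] {T : Set G} (hT : IsCenterTransversal G T)

omit [Finite G] in
lemma tgraph_adj {x y : ↥(T \ (center G : Set G))} :
    (TGraph G T).Adj x y ↔ x ≠ y ∧ (x : G) * y = (y : G) * x := Iff.rfl

include hT in
/-- Degree formula: every vertex has degree `[C_G(x):Z(G)] - 2`. -/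
lemma tgraph_degree (x : G) (hx : x ∈ T \ (center G : Set G)) :
    ((TGraph G T).neighborSet ⟨x, hx⟩).ncard + 2 =
      (center G).relIndex (centralizer {x}) := by
  set C := centralizer ({x} : Set G) with hCdef
  set N := (TGraph G T).neighborSet ⟨x, hx⟩ with hN
  set S : Set G := Subtype.val '' N with hS
  set t0 := ctRep hT 1 with ht0
  have ht0Z : t0 ∈ center G := by simpa using ctRep_spec hT 1
  have ht0T : t0 ∈ T := ctRep_mem hT 1
  have hxT : x ∈ T := hx.1
  have hxZ : x ∉ (center G : Set G) := hx.2
  have hSsub : ∀ t ∈ S, t ∈ T ∧ t ∉ (center G : Set G) ∧ t ≠ x ∧ t * x = x * t := by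
    rintro t ⟨⟨y, hy⟩, hmem, rfl⟩
    have hadj : (TGraph G T).Adj ⟨x, hx⟩ ⟨y, hy⟩ := hmem
    obtain ⟨hne, hcomm⟩ := tgraph_adj.mp hadj
    exact ⟨hy.1, hy.2, fun h => hne (Subtype.ext h.symm), hcomm.symm⟩
  have hset : T ∩ (C : Set G) = insert x (insert t0 S) := by
    ext t
    constructor
    · rintro ⟨htT, htC⟩
      by_cases h1 : t = x
      · exact Set.mem_insert_iff.mpr (Or.inl h1)
      by_cases h2 : t = t0
      · exact Set.mem_insert_of_mem _ (Set.mem_insert_iff.mpr (Or.inl h2))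
      · refine Set.mem_insert_of_mem _ (Set.mem_insert_of_mem _ ?_)
        have htZ : t ∉ (center G : Set G) := by
          intro hZ
          exact h2 (ctRep_unique hT htT (by simpa using hZ))
        have htmem : t ∈ T \ (center G : Set G) := ⟨htT, htZ⟩
        refine ⟨⟨t, htmem⟩, ?_, rfl⟩
        show (TGraph G T).Adj ⟨x, hx⟩ ⟨t, htmem⟩
        rw [tgraph_adj]
        exact ⟨fun h => h1 (congrArg Subtype.val h).symm,
          (mem_centralizer_singleton_iff.mp htC).symm⟩
    · intro h
      rcases h with rfl | h
      · exact ⟨hxT, mem_centralizer_singleton_iff.mpr rfl⟩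
      rcases h with rfl | h
      · exact ⟨ht0T, center_le_centralizer {x} ht0Z⟩
      · obtain ⟨h1, h2, h3, h4⟩ := hSsub t h
        exact ⟨h1, mem_centralizer_singleton_iff.mpr h4⟩
  have hxnot : x ∉ insert t0 S := by
    rintro (rfl | h)
    · exact hxZ ht0Z
    · exact (hSsub x h).2.2.1 rfl
  have ht0not : t0 ∉ S := fun h => (hSsub t0 h).2.1 ht0Z
  have hScard : S.ncard = N.ncard := Set.ncard_image_of_injective N Subtype.val_injective
  have hkey := ctRep_card hT x
  rw [← hCdef] at hkey
  rw [Nat.card_coe_set_eq, hset, Set.ncard_insert_of_notMem hxnot (Set.toFinite _),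
    Set.ncard_insert_of_notMem ht0not (Set.toFinite _), hScard] at hkey
  omega

omit [Finite G] in
/-- Transitivity of adjacency from abelian centralizers. -/
lemma tgraph_trans (hC : ∀ x : G, x ∉ center G → IsMulCommutative (centralizer {x}))
    {a b c : ↥(T \ (center G : Set G))} (hab : (TGraph G T).Adj a b)
    (hbc : (TGraph G T).Adj b c) (hac : a ≠ c) : (TGraph G T).Adj a c := by
  haveI := hC (b : G) b.2.2
  obtain ⟨-, h1⟩ := tgraph_adj.mp hab
  obtain ⟨-, h2⟩ := tgraph_adj.mp hbc
  refine tgraph_adj.mpr ⟨hac, ?_⟩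
  exact (centralizer {(b : G)}).mul_comm_of_mem_isMulCommutative
    (mem_centralizer_singleton_iff.mpr h1)
    (mem_centralizer_singleton_iff.mpr h2.symm)

omit [Finite G] in
lemma tgraph_reachable_commute
    (hC : ∀ x : G, x ∉ center G → IsMulCommutative (centralizer {x}))
    {a b : ↥(T \ (center G : Set G))} (h : (TGraph G T).Reachable a b) :
    (a : G) * b = (b : G) * a := by
  obtain ⟨w⟩ := h
  induction w with
  | nil => rfl
  | @cons u v w h p ih =>
    haveI := hC (v : G) v.2.2
    obtain ⟨-, h1⟩ := tgraph_adj.mp h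
    exact (centralizer {(v : G)}).mul_comm_of_mem_isMulCommutative
      (mem_centralizer_singleton_iff.mpr h1)
      (mem_centralizer_singleton_iff.mpr ih.symm)

include hT in
omit [Finite G] in
lemma centralizer_comm_of_trans
    (htr : ∀ a b c : ↥(T \ (center G : Set G)), (TGraph G T).Adj a b →
      (TGraph G T).Adj b c → a ≠ c → (TGraph G T).Adj a c)
    (x : G) (hx : x ∉ center G) : IsMulCommutative (centralizer ({x} : Set G)) := by
  have key : ∀ a ∈ centralizer ({x} : Set G), ∀ b ∈ centralizer ({x} : Set G),
      a * b = b * a := by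
    intro a ha b hb
    by_cases haz : a ∈ center G
    · exact (Subgroup.mem_center_iff.mp haz b).symm
    by_cases hbz : b ∈ center G
    · exact Subgroup.mem_center_iff.mp hbz a
    by_cases habz : a⁻¹ * b ∈ center G
    · have hb' : b = a * (a⁻¹ * b) := by group
      rw [hb']
      exact ((mul_center_comm habz a a).mpr rfl).symm
    by_cases haxz : x⁻¹ * a ∈ center G
    · have ha' : a = x * (x⁻¹ * a) := by group
      rw [ha']
      exact (mul_center_comm haxz x b).mpr (mem_centralizer_singleton_iff.mp hb).symm
    by_cases hbxz : x⁻¹ * b ∈ center G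
    · have hb' : b = x * (x⁻¹ * b) := by group
      rw [hb']
      exact ((mul_center_comm hbxz x a).mpr
        (mem_centralizer_singleton_iff.mp ha).symm).symm
    · have haT : ctRep hT a ∈ T \ (center G : Set G) :=
        ⟨ctRep_mem hT a, fun h => haz ((ctRep_mem_center_iff hT a).mp h)⟩
      have hbT : ctRep hT b ∈ T \ (center G : Set G) :=
        ⟨ctRep_mem hT b, fun h => hbz ((ctRep_mem_center_iff hT b).mp h)⟩
      have hxT : ctRep hT x ∈ T \ (center G : Set G) :=
        ⟨ctRep_mem hT x, fun h => hx ((ctRep_mem_center_iff hT x).mp h)⟩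
      have hAX : (TGraph G T).Adj ⟨ctRep hT a, haT⟩ ⟨ctRep hT x, hxT⟩ := by
        refine tgraph_adj.mpr ⟨?_, ?_⟩
        · intro h
          have h' := (ctRep_eq_iff hT a x).mp (congrArg Subtype.val h)
          have := inv_mem h'
          simp only [mul_inv_rev, inv_inv] at this
          exact haxz this
        · exact (ctRep_commute hT a (ctRep hT x)).mpr
            (((ctRep_commute hT x a).mpr (mem_centralizer_singleton_iff.mp ha).symm).symm)
      have hXB : (TGraph G T).Adj ⟨ctRep hT x, hxT⟩ ⟨ctRep hT b, hbT⟩ := by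
        refine tgraph_adj.mpr ⟨?_, ?_⟩
        · intro h
          exact hbxz ((ctRep_eq_iff hT x b).mp (congrArg Subtype.val h))
        · exact (ctRep_commute hT x (ctRep hT b)).mpr
            (((ctRep_commute hT b x).mpr (mem_centralizer_singleton_iff.mp hb)).symm)
      have hAB : (⟨ctRep hT a, haT⟩ : ↥(T \ (center G : Set G))) ≠ ⟨ctRep hT b, hbT⟩ := by
        intro h
        exact habz ((ctRep_eq_iff hT a b).mp (congrArg Subtype.val h))
      have hadj := htr _ _ _ hAX hXB hAB
      obtain ⟨-, hcomm⟩ := tgraph_adj.mp hadj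
      have h1 := (ctRep_commute hT a (ctRep hT b)).mp hcomm
      exact ((ctRep_commute hT b a).mp h1.symm).symm
  exact ⟨⟨fun p q => Subtype.ext (key p.1 p.2 q.1 q.2)⟩⟩

end GraphHelpers
end Helpers
theorem stmt16 (G : Type*) [Group G] [Finite G] (hna : ∃ a b : G, a * b ≠ b * a)
    (T : Set G) (hT : IsCenterTransversal G T) :
    ((∃ v k l m, IsSRG (TGraph G T) v k l m) ∧ ¬ (TGraph G T).Connected) ↔
      ((∀ x : G, x ∉ Subgroup.center G → IsMulCommutative (Subgroup.centralizer {x})) ∧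
        ∃ r : ℕ, 3 ≤ r ∧ ∀ x : G, x ∉ Subgroup.center G →
          (Subgroup.center G).relIndex (Subgroup.centralizer {x}) = r) := by
  classical
  constructor
  · rintro ⟨⟨v, k, l, m, hv, hk, hkv, hdeg, hl, hm⟩, hconn⟩
    have hvpos : 0 < Nat.card ↥(T \ ((center G : Subgroup G) : Set G)) := by
      rw [hv]; omega
    haveI hne : Nonempty ↥(T \ ((center G : Subgroup G) : Set G)) :=
      (Nat.card_pos_iff.mp hvpos).1
    obtain ⟨u, w, hur⟩ : ∃ u w, ¬ (TGraph G T).Reachable u w := by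
      by_contra h; push_neg at h; exact hconn ⟨fun u w => h u w⟩
    have huw : u ≠ w := fun h => hur (h ▸ SimpleGraph.Reachable.refl u)
    have hnadj : ¬ (TGraph G T).Adj u w := fun h => hur h.reachable
    have hm0 : m = 0 := by
      rw [← hm u w huw hnadj]
      rw [Set.ncard_eq_zero (Set.toFinite _)]
      ext z
      simp only [Set.mem_inter_iff, SimpleGraph.mem_neighborSet,
        Set.mem_empty_iff_false, iff_false, not_and]
      intro h1 h2
      exact hur (h1.reachable.trans h2.symm.reachable)
    have htr : ∀ a b c : ↥(T \ ((center G : Subgroup G) : Set G)),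
        (TGraph G T).Adj a b → (TGraph G T).Adj b c → a ≠ c → (TGraph G T).Adj a c := by
      intro a b c hab hbc hac
      by_contra hnadj2
      have h0 := hm a c hac hnadj2
      rw [hm0, Set.ncard_eq_zero (Set.toFinite _)] at h0
      have hb : b ∈ (TGraph G T).neighborSet a ∩ (TGraph G T).neighborSet c :=
        ⟨hab, hbc.symm⟩
      rw [h0] at hb
      exact hb
    refine ⟨fun x hx => centralizer_comm_of_trans hT htr x hx, k + 2, by omega, ?_⟩
    intro x hx
    have hxv : ctRep hT x ∈ T \ ((center G : Subgroup G) : Set G) :=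
      ⟨ctRep_mem hT x, fun h => hx ((ctRep_mem_center_iff hT x).mp h)⟩
    have hd := tgraph_degree hT (ctRep hT x) hxv
    rw [ctRep_centralizer hT x] at hd
    rw [← hd, hdeg ⟨ctRep hT x, hxv⟩]
  · rintro ⟨hC, r, hr3, hrel⟩
    obtain ⟨a, b, hab⟩ := hna
    have haz : a ∉ center G := fun h => hab (Subgroup.mem_center_iff.mp h b).symm
    have hx0 : ctRep hT a ∈ T \ ((center G : Subgroup G) : Set G) :=
      ⟨ctRep_mem hT a, fun h => haz ((ctRep_mem_center_iff hT a).mp h)⟩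
    obtain ⟨y, hyz, hyc⟩ : ∃ y, y ∉ center G ∧ y ∉ centralizer ({ctRep hT a} : Set G) := by
      by_contra h; push_neg at h
      apply hx0.2
      rw [SetLike.mem_coe, Subgroup.mem_center_iff]
      intro g
      by_cases hg : g ∈ center G
      · exact (Subgroup.mem_center_iff.mp hg (ctRep hT a)).symm
      · exact mem_centralizer_singleton_iff.mp (h g hg)
    have hyv : ctRep hT y ∈ T \ ((center G : Subgroup G) : Set G) :=
      ⟨ctRep_mem hT y, fun h => hyz ((ctRep_mem_center_iff hT y).mp h)⟩
    have hyc' : ¬ ((ctRep hT y : G) * ctRep hT a = ctRep hT a * ctRep hT y) := by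
      intro h
      exact hyc (mem_centralizer_singleton_iff.mpr ((ctRep_commute hT y (ctRep hT a)).mp h))
    have hXYnadj : ¬ (TGraph G T).Adj ⟨ctRep hT a, hx0⟩ ⟨ctRep hT y, hyv⟩ :=
      fun h => hyc' (tgraph_adj.mp h).2.symm
    have hXYne : (⟨ctRep hT a, hx0⟩ : ↥(T \ ((center G : Subgroup G) : Set G))) ≠
        ⟨ctRep hT y, hyv⟩ := by
      intro h
      have h' : ctRep hT a = ctRep hT y := congrArg Subtype.val h
      exact hyc' (by rw [← h'])
    have hdeg : ∀ z : ↥(T \ ((center G : Subgroup G) : Set G)),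
        ((TGraph G T).neighborSet z).ncard = r - 2 := by
      intro z
      have h1 : ((TGraph G T).neighborSet z).ncard + 2 =
          (center G).relIndex (centralizer {(z : G)}) := tgraph_degree hT z.1 z.2
      rw [hrel z.1 z.2.2] at h1
      omega
    refine ⟨⟨Nat.card _, r - 2, r - 3, 0, rfl, by omega, ?_, hdeg, ?_, ?_⟩, ?_⟩
    · -- k + 1 < v
      have hins : (⟨ctRep hT y, hyv⟩ : ↥(T \ ((center G : Subgroup G) : Set G))) ∉
          insert (⟨ctRep hT a, hx0⟩ : ↥(T \ ((center G : Subgroup G) : Set G)))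
            ((TGraph G T).neighborSet ⟨ctRep hT a, hx0⟩) := by
        intro h
        rcases Set.mem_insert_iff.mp h with h | h
        · exact hXYne h.symm
        · exact hXYnadj h
      have hss : insert (⟨ctRep hT a, hx0⟩ : ↥(T \ ((center G : Subgroup G) : Set G)))
          ((TGraph G T).neighborSet ⟨ctRep hT a, hx0⟩) ⊂ Set.univ :=
        Set.ssubset_univ_iff.mpr (fun h => hins (h ▸ Set.mem_univ _))
      have hlt := Set.ncard_lt_ncard hss Set.finite_univ
      have hnm : (⟨ctRep hT a, hx0⟩ : ↥(T \ ((center G : Subgroup G) : Set G))) ∉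
          (TGraph G T).neighborSet ⟨ctRep hT a, hx0⟩ :=
        fun h => (TGraph G T).loopless.irrefl _ h
      rw [Set.ncard_univ, Set.ncard_insert_of_notMem hnm (Set.toFinite _), hdeg] at hlt
      omega
    · -- lambda
      intro p q hpq
      have hset : (TGraph G T).neighborSet p ∩ (TGraph G T).neighborSet q =
          (TGraph G T).neighborSet p \ {q} := by
        ext z
        simp only [Set.mem_inter_iff, SimpleGraph.mem_neighborSet, Set.mem_diff,
          Set.mem_singleton_iff]
        constructor
        · rintro ⟨h1, h2⟩
          exact ⟨h1, fun h => (TGraph G T).loopless.irrefl q (h ▸ h2)⟩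
        · rintro ⟨h1, h2⟩
          exact ⟨h1, tgraph_trans hC hpq.symm h1 (fun h => h2 h.symm)⟩
      rw [hset, Set.ncard_diff_singleton_of_mem (((TGraph G T).mem_neighborSet p q).mpr hpq), hdeg p]
      omega
    · -- mu = 0
      intro p q hne2 hnadj2
      rw [Set.ncard_eq_zero (Set.toFinite _)]
      ext z
      simp only [Set.mem_inter_iff, SimpleGraph.mem_neighborSet,
        Set.mem_empty_iff_false, iff_false, not_and]
      intro h1 h2
      exact hnadj2 (tgraph_trans hC h1 h2.symm hne2)
    · -- not connected
      intro h
      exact hyc' (tgraph_reachable_commute hC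
        (h.preconnected ⟨ctRep hT y, hyv⟩ ⟨ctRep hT a, hx0⟩))
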